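/- Let (E, d) be a Polish space and (Z_n) a sequence of E-valued random elements on a probability space. Then (Z_n) converges in probability to some E-valued random element if and only if for every pair of subsequences (Z_{m_k}) and (Z_{n_k}) there exists a further subsequence along which the pair (Z_{m_{k(p)}}, Z_{n_{k(p)}}) converges weakly (in distribution on E × E) to a limit law supported on the diagonal {(x,y) ∈ E × E : x = y}. -/

import Mathlib

open MeasureTheory Filter Topology
open scoped ENNReal NNReal

private lemma exists_rho (E : Type*) [TopologicalSpace E] [PolishSpace E] :
    ∃ ρ : E → E → ℝ,
      Continuous (fun p : E × E => ρ p.1 p.2) ∧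
      (∀ x, ρ x x = 0) ∧ (∀ x y, ρ x y = ρ y x) ∧
      (∀ x y z, ρ x z ≤ ρ x y + ρ y z) ∧
      (∀ u : ℕ → E, (∀ ε : ℝ, 0 < ε → ∃ M, ∀ p ≥ M, ∀ q ≥ M, ρ (u p) (u q) < ε) →
        ∃ a, Tendsto u atTop (𝓝 a)) := by
  letI := TopologicalSpace.upgradeIsCompletelyMetrizable E
  refine ⟨dist, continuous_dist, dist_self, dist_comm, dist_triangle, ?_⟩
  intro u hu
  have hc : CauchySeq u := by
    rw [Metric.cauchySeq_iff]
    intro ε hε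
    obtain ⟨M, hM⟩ := hu ε hε
    exact ⟨M, fun p hp q hq => hM p hp q hq⟩
  obtain ⟨a, ha⟩ := cauchySeq_tendsto_of_complete hc
  exact ⟨a, ha⟩

private lemma gk_step1
    {Ω : Type*} [MeasurableSpace Ω] (P : Measure Ω) [IsProbabilityMeasure P]
    {E : Type*} [MetricSpace E] [PolishSpace E] [MeasurableSpace E] [BorelSpace E]
    (Z : ℕ → Ω → E) (hZ : ∀ n, Measurable (Z n))
    (H : ∀ m n : ℕ → ℕ, StrictMono m → StrictMono n →
        ∃ k : ℕ → ℕ, StrictMono k ∧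
          ∃ ν : Measure (E × E), IsProbabilityMeasure ν ∧
            ν {p : E × E | p.1 = p.2} = 1 ∧
            ∀ g : BoundedContinuousFunction (E × E) ℝ,
              Tendsto (fun p => ∫ ω, g (Z (m (k p)) ω, Z (n (k p)) ω) ∂P)
                atTop (𝓝 (∫ x, g x ∂ν)))
    (f : E × E → ℝ) (hfc : Continuous f) (hf0 : ∀ x : E, f (x, x) = 0)
    {ε : ℝ} (hε : 0 < ε) {δ : ℝ≥0∞} (hδ : 0 < δ) :
    ∃ N : ℕ, ∀ a ≥ N, ∀ b ≥ N, P {ω | ε ≤ f (Z a ω, Z b ω)} < δ := by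
  by_contra hco
  push_neg at hco
  have key : ∀ N : ℕ, ∃ q : ℕ × ℕ, N ≤ q.1 ∧ N ≤ q.2 ∧
      δ ≤ P {ω | ε ≤ f (Z q.1 ω, Z q.2 ω)} := by
    intro N
    obtain ⟨a, ha, b, hb, h⟩ := hco N
    exact ⟨(a, b), ha, hb, h⟩
  choose q hq1 hq2 hq3 using key
  set g : ℕ → ℕ × ℕ := fun k => Nat.rec (q 0) (fun _ p => q (max p.1 p.2 + 1)) k with hg
  have hgsucc : ∀ k, g (k + 1) = q (max (g k).1 (g k).2 + 1) := fun k => rfl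
  have hm1 : StrictMono (fun k => (g k).1) := by
    apply strictMono_nat_of_lt_succ
    intro k
    have := hq1 (max (g k).1 (g k).2 + 1)
    rw [hgsucc]
    omega
  have hn1 : StrictMono (fun k => (g k).2) := by
    apply strictMono_nat_of_lt_succ
    intro k
    have := hq2 (max (g k).1 (g k).2 + 1)
    rw [hgsucc]
    omega
  have hdelta : ∀ k, δ ≤ P {ω | ε ≤ f (Z (g k).1 ω, Z (g k).2 ω)} := by
    intro k
    cases k with
    | zero => exact hq3 0
    | succ k => rw [hgsucc]; exact hq3 _
  obtain ⟨k, hk, ν, hνp, hνdiag, hconv⟩ := H (fun k => (g k).1) (fun k => (g k).2) hm1 hn1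
  have hpair : ∀ p : ℕ, Measurable (fun ω => (Z (g (k p)).1 ω, Z (g (k p)).2 ω)) :=
    fun p => (hZ _).prodMk (hZ _)
  let μs : ℕ → ProbabilityMeasure (E × E) := fun p =>
    ⟨P.map (fun ω => (Z (g (k p)).1 ω, Z (g (k p)).2 ω)),
      Measure.isProbabilityMeasure_map (hpair p).aemeasurable⟩
  haveI := hνp
  let νP : ProbabilityMeasure (E × E) := ⟨ν, hνp⟩
  have htendsto : Tendsto μs atTop (𝓝 νP) := by
    rw [ProbabilityMeasure.tendsto_iff_forall_integral_tendsto]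
    intro gbc
    have heq : ∀ p, ∫ x, gbc x ∂(μs p : Measure (E × E)) =
        ∫ ω, gbc (Z (g (k p)).1 ω, Z (g (k p)).2 ω) ∂P := fun p =>
      integral_map (hpair p).aemeasurable gbc.continuous.aestronglyMeasurable
    simp only [heq]
    exact hconv gbc
  set F : Set (E × E) := {p | ε ≤ f p} with hF
  have hFclosed : IsClosed F := isClosed_le continuous_const hfc
  have hFmeas : MeasurableSet F := hFclosed.measurableSet
  have hDmeas : MeasurableSet {p : E × E | p.1 = p.2} :=
    (isClosed_eq continuous_fst continuous_snd).measurableSet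
  have hνF : ν F = 0 := by
    have hsub : F ⊆ {p : E × E | p.1 = p.2}ᶜ := by
      intro p hp hpd
      have : f p = 0 := by
        have : p = (p.1, p.1) := by
          ext
          · rfl
          · exact hpd.symm
        rw [this]; exact hf0 p.1
      simp only [hF, Set.mem_setOf_eq] at hp
      linarith
    refine measure_mono_null hsub ?_
    rw [measure_compl hDmeas (measure_ne_top ν _), hνdiag, measure_univ, tsub_self]
  have hlimsup := ProbabilityMeasure.limsup_measure_closed_le_of_tendsto htendsto hFclosed
  have hμsF : ∀ p, δ ≤ (μs p : Measure (E × E)) F := by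
    intro p
    have : (μs p : Measure (E × E)) F = P {ω | ε ≤ f (Z (g (k p)).1 ω, Z (g (k p)).2 ω)} := by
      show P.map _ F = _
      rw [Measure.map_apply (hpair p) hFmeas]
      rfl
    rw [this]
    exact hdelta (k p)
  have h1 : δ ≤ atTop.limsup (fun p => (μs p : Measure (E × E)) F) := by
    have := Filter.limsup_le_limsup (f := atTop) (Filter.Eventually.of_forall hμsF)
    rwa [limsup_const] at this
  have : δ ≤ (νP : Measure (E × E)) F := h1.trans hlimsup
  rw [show (νP : Measure (E × E)) = ν from rfl, hνF] at this
  exact absurd this (by simpa using hδ.ne')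

theorem gyongy_krylov
    {Ω : Type*} [MeasurableSpace Ω] (P : MeasureTheory.Measure Ω)
    [MeasureTheory.IsProbabilityMeasure P]
    {E : Type*} [MetricSpace E] [PolishSpace E] [MeasurableSpace E] [BorelSpace E]
    (Z : ℕ → Ω → E) (hZ : ∀ n, Measurable (Z n)) :
    (∃ Zlim : Ω → E, Measurable Zlim ∧
        MeasureTheory.TendstoInMeasure P Z Filter.atTop Zlim) ↔
      (∀ m n : ℕ → ℕ, StrictMono m → StrictMono n →
        ∃ k : ℕ → ℕ, StrictMono k ∧
          ∃ ν : MeasureTheory.Measure (E × E), MeasureTheory.IsProbabilityMeasure ν ∧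
            ν {p : E × E | p.1 = p.2} = 1 ∧
            ∀ g : BoundedContinuousFunction (E × E) ℝ,
              Filter.Tendsto
                (fun p => ∫ ω, g (Z (m (k p)) ω, Z (n (k p)) ω) ∂P)
                Filter.atTop (𝓝 (∫ x, g x ∂ν))) := by
  classical
  constructor
  · rintro ⟨Zlim, hZlim, htim⟩
    intro m n hm hn
    have hsubm : TendstoInMeasure P (fun j => Z (m j)) atTop Zlim :=
      fun ε hε => (htim ε hε).comp hm.tendsto_atTop
    obtain ⟨k₁, hk₁, hae₁⟩ := hsubm.exists_seq_tendsto_ae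
    have hsubn : TendstoInMeasure P (fun j => Z (n (k₁ j))) atTop Zlim :=
      fun ε hε => (htim ε hε).comp (hn.comp hk₁).tendsto_atTop
    obtain ⟨k₂, hk₂, hae₂⟩ := hsubn.exists_seq_tendsto_ae
    have pairmeas : Measurable (fun ω => (Zlim ω, Zlim ω)) := hZlim.prodMk hZlim
    have hDmeas : MeasurableSet {p : E × E | p.1 = p.2} :=
      (isClosed_eq continuous_fst continuous_snd).measurableSet
    refine ⟨k₁ ∘ k₂, hk₁.comp hk₂, P.map (fun ω => (Zlim ω, Zlim ω)),
      Measure.isProbabilityMeasure_map pairmeas.aemeasurable, ?_, ?_⟩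
    · rw [Measure.map_apply pairmeas hDmeas]
      have : (fun ω => (Zlim ω, Zlim ω)) ⁻¹' {p : E × E | p.1 = p.2} = Set.univ := by
        ext ω; simp
      rw [this, measure_univ]
    · intro gbc
      rw [integral_map pairmeas.aemeasurable gbc.continuous.aestronglyMeasurable]
      apply tendsto_integral_of_dominated_convergence (fun _ => ‖gbc‖)
      · intro p
        exact (gbc.continuous.measurable.comp ((hZ _).prodMk (hZ _))).aestronglyMeasurable
      · exact integrable_const _
      · intro p
        exact Filter.Eventually.of_forall (fun ω => gbc.norm_coe_le_norm _)
      · filter_upwards [hae₁, hae₂] with ω h1 h2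
        have h1' : Tendsto (fun p => Z (m (k₁ (k₂ p))) ω) atTop (𝓝 (Zlim ω)) :=
          h1.comp hk₂.tendsto_atTop
        exact (gbc.continuous.tendsto _).comp (h1'.prodMk_nhds h2)
  · intro H
    obtain ⟨ρ, hρc, hρ0, hρsymm, hρtri, hρcomplete⟩ := exists_rho E
    haveI : Nonempty Ω := by
      by_contra h
      rw [not_nonempty_iff] at h
      have h1 : P Set.univ = 1 := measure_univ
      rw [Set.univ_eq_empty_iff.mpr h] at h1
      simp at h1
    haveI : Nonempty E := ⟨Z 0 (Classical.arbitrary Ω)⟩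
    have hstep : ∀ p : ℕ, ∃ N : ℕ, ∀ a ≥ N, ∀ b ≥ N,
        P {ω | (2:ℝ)⁻¹ ^ p ≤ ρ (Z a ω) (Z b ω)} < (2:ℝ≥0∞)⁻¹ ^ p := by
      intro p
      exact gk_step1 P Z hZ H (fun x => ρ x.1 x.2) hρc (fun x => hρ0 x)
        (by positivity) (ENNReal.pow_pos (by norm_num) p)
    choose N hN using hstep
    set φ : ℕ → ℕ := fun p => p + ∑ q ∈ Finset.range (p+1), N q with hφ
    have hφmono : StrictMono φ := by
      apply strictMono_nat_of_lt_succ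
      intro p
      have : ∑ q ∈ Finset.range (p+1), N q ≤ ∑ q ∈ Finset.range (p+1+1), N q := by
        apply Finset.sum_le_sum_of_subset
        intro x hx
        simp only [Finset.mem_range] at hx ⊢
        omega
      simp only [hφ]
      omega
    have hφge : ∀ p, N p ≤ φ p := by
      intro p
      have h1 : N p ≤ ∑ q ∈ Finset.range (p+1), N q :=
        Finset.single_le_sum (f := N) (fun i _ => Nat.zero_le _) (Finset.self_mem_range_succ p)
      simp only [hφ]
      omega
    have hφge' : ∀ p, N p ≤ φ (p+1) := fun p => (hφge p).trans (hφmono (Nat.lt_succ_self p)).le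
    have hφid : ∀ p, p ≤ φ p := fun p => Nat.le_add_right p _
    set A : ℕ → Set Ω :=
      fun p => {ω | (2:ℝ)⁻¹ ^ p ≤ ρ (Z (φ p) ω) (Z (φ (p+1)) ω)} with hA
    have hAbound : ∀ p, P (A p) < (2:ℝ≥0∞)⁻¹ ^ p :=
      fun p => hN p (φ p) (hφge p) (φ (p+1)) (hφge' p)
    have hsum : (∑' p, P (A p)) ≠ ∞ := by
      have hle : (∑' p, P (A p)) ≤ ∑' p, (2:ℝ≥0∞)⁻¹ ^ p :=
        ENNReal.tsum_le_tsum (fun p => (hAbound p).le)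
      have : (∑' p : ℕ, (2:ℝ≥0∞)⁻¹ ^ p) = (1 - 2⁻¹)⁻¹ := ENNReal.tsum_geometric _
      rw [this] at hle
      refine ne_top_of_le_ne_top ?_ hle
      rw [ENNReal.one_sub_inv_two, inv_inv]
      exact ENNReal.ofNat_ne_top
    have hBC : ∀ᵐ ω ∂P, ∀ᶠ p in atTop, ω ∉ A p := ae_eventually_notMem hsum
    have htendae : ∀ᵐ ω ∂P, ∃ a, Tendsto (fun p => Z (φ p) ω) atTop (𝓝 a) := by
      filter_upwards [hBC] with ω hω
      apply hρcomplete
      intro ε hε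
      obtain ⟨M₀, hM₀⟩ := eventually_atTop.mp hω
      have chain : ∀ p, M₀ ≤ p → ∀ d : ℕ,
          ρ (Z (φ p) ω) (Z (φ (p+d)) ω) ≤ 2 * (2:ℝ)⁻¹ ^ p - 2 * (2:ℝ)⁻¹ ^ (p+d) := by
        intro p hp d
        induction d with
        | zero => simp [hρ0]
        | succ d ih =>
          have h1 : ρ (Z (φ (p+d)) ω) (Z (φ (p+d+1)) ω) < (2:ℝ)⁻¹ ^ (p+d) := by
            have := hM₀ (p+d) (le_trans hp (Nat.le_add_right p d))
            simp only [hA, Set.mem_setOf_eq, not_le] at this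
            exact this
          have htr := hρtri (Z (φ p) ω) (Z (φ (p+d)) ω) (Z (φ (p+d+1)) ω)
          have hps : (2:ℝ)⁻¹ ^ (p + (d+1)) = (2:ℝ)⁻¹ ^ (p+d) * 2⁻¹ := by
            rw [← pow_succ]
            ring_nf
          have : p + (d + 1) = (p + d) + 1 := by omega
          rw [this]
          rw [show (p + d) + 1 = p + d + 1 from rfl]
          have h2 : ρ (Z (φ p) ω) (Z (φ (p+d+1)) ω) ≤
              (2 * (2:ℝ)⁻¹ ^ p - 2 * (2:ℝ)⁻¹ ^ (p+d)) + (2:ℝ)⁻¹ ^ (p+d) := by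
            linarith
          have h3 : 2 * (2:ℝ)⁻¹ ^ (p+d+1) = (2:ℝ)⁻¹ ^ (p+d) := by
            rw [pow_succ]
            ring
          linarith
      obtain ⟨M₁, hM₁⟩ := exists_pow_lt_of_lt_one (half_pos hε) (by norm_num : (2:ℝ)⁻¹ < 1)
      refine ⟨max M₀ M₁, ?_⟩
      have main : ∀ p q, max M₀ M₁ ≤ p → p ≤ q →
          ρ (Z (φ p) ω) (Z (φ q) ω) < ε := by
        intro p q hp hpq
        obtain ⟨d, rfl⟩ := Nat.exists_eq_add_of_le hpq
        have hch := chain p (le_trans (le_max_left _ _) hp) d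
        have h2 : (2:ℝ)⁻¹ ^ p ≤ (2:ℝ)⁻¹ ^ M₁ :=
          pow_le_pow_of_le_one (by norm_num) (by norm_num) (le_trans (le_max_right _ _) hp)
        have h3 : (0:ℝ) ≤ 2 * (2:ℝ)⁻¹ ^ (p + d) := by positivity
        have h4 : (2:ℝ)⁻¹ ^ M₁ < ε / 2 := hM₁
        linarith
      intro p hp q hq
      rcases le_total p q with h | h
      · exact main p q hp h
      · rw [hρsymm]
        exact main q p hq h
    set g0 : Ω → E := fun ω =>
      if h : ∃ a, Tendsto (fun p => Z (φ p) ω) atTop (𝓝 a) then h.choose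
      else Classical.arbitrary E with hg0
    have htend : ∀ᵐ ω ∂P, Tendsto (fun p => Z (φ p) ω) atTop (𝓝 (g0 ω)) := by
      filter_upwards [htendae] with ω hω
      simp only [hg0, dif_pos hω]
      exact hω.choose_spec
    have hg0ae : AEMeasurable g0 P :=
      aemeasurable_of_tendsto_metrizable_ae' (fun p => (hZ (φ p)).aemeasurable) htend
    refine ⟨hg0ae.mk g0, hg0ae.measurable_mk, ?_⟩
    have htend' : ∀ᵐ ω ∂P, Tendsto (fun p => Z (φ p) ω) atTop (𝓝 (hg0ae.mk g0 ω)) := by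
      filter_upwards [htend, hg0ae.ae_eq_mk] with ω h1 h2
      rwa [h2] at h1
    have hsubTIM : TendstoInMeasure P (fun p => Z (φ p)) atTop (hg0ae.mk g0) :=
      tendstoInMeasure_of_tendsto_ae (fun p => (hZ (φ p)).aestronglyMeasurable) htend'
    rw [tendstoInMeasure_iff_dist]
    intro ε hε
    rw [ENNReal.tendsto_atTop_zero]
    intro δ hδ
    obtain ⟨N₁, hN₁⟩ := gk_step1 P Z hZ H (fun x => dist x.1 x.2) continuous_dist
      (fun x => dist_self x) (half_pos hε) (ENNReal.half_pos hδ.ne')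
    have h2 := tendstoInMeasure_iff_dist.mp hsubTIM (ε/2) (half_pos hε)
    rw [ENNReal.tendsto_atTop_zero] at h2
    obtain ⟨N₂, hN₂⟩ := h2 (δ/2) (ENNReal.half_pos hδ.ne')
    set p₀ := max N₁ N₂ with hp₀
    refine ⟨N₁, fun n hn => ?_⟩
    have hsubset : {ω | ε ≤ dist (Z n ω) (hg0ae.mk g0 ω)} ⊆
        {ω | ε/2 ≤ dist (Z n ω) (Z (φ p₀) ω)} ∪
        {ω | ε/2 ≤ dist (Z (φ p₀) ω) (hg0ae.mk g0 ω)} := by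
      intro ω hω
      by_contra hcon
      simp only [Set.mem_union, Set.mem_setOf_eq, not_or, not_le] at hcon
      simp only [Set.mem_setOf_eq] at hω
      have := dist_triangle (Z n ω) (Z (φ p₀) ω) (hg0ae.mk g0 ω)
      linarith [hcon.1, hcon.2]
    calc P {ω | ε ≤ dist (Z n ω) (hg0ae.mk g0 ω)}
        ≤ P ({ω | ε/2 ≤ dist (Z n ω) (Z (φ p₀) ω)} ∪
            {ω | ε/2 ≤ dist (Z (φ p₀) ω) (hg0ae.mk g0 ω)}) := measure_mono hsubset
      _ ≤ P {ω | ε/2 ≤ dist (Z n ω) (Z (φ p₀) ω)} +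
          P {ω | ε/2 ≤ dist (Z (φ p₀) ω) (hg0ae.mk g0 ω)} := measure_union_le _ _
      _ ≤ δ/2 + δ/2 := by
          gcongr
          · exact (hN₁ n hn (φ p₀) (le_trans (le_max_left _ _) (hφid p₀))).le
          · exact hN₂ p₀ (le_max_right _ _)
      _ = δ := ENNReal.add_halves δ
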